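/- If A is an infinite-dimensional division algebra over a field k, then the finite dual coalgebra A° is zero. -/

import Mathlib

open TensorProduct

universe u

section MeasuringPreamble

variable {k : Type u} [CommRing k]

/-- The convolution product of two linear maps `C →ₗ[k] B` from a coalgebra `C` to an
algebra `B`: `f * g = μ_B ∘ (f ⊗ g) ∘ Δ_C`. -/
noncomputable def convMulL {C B : Type u} [AddCommGroup C] [Module k C] [Coalgebra k C]
    [Ring B] [Algebra k B] (f g : C →ₗ[k] B) : C →ₗ[k] B :=
  LinearMap.mul' k B ∘ₗ TensorProduct.map f g ∘ₗ Coalgebra.comul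

/-- The convolution unit `ι_B ∘ ε_C : C →ₗ[k] B`. -/
noncomputable def convOneL {C B : Type u} [AddCommGroup C] [Module k C] [Coalgebra k C]
    [Ring B] [Algebra k B] : C →ₗ[k] B :=
  Algebra.linearMap k B ∘ₗ Coalgebra.counit

/-- `φ : A →ₗ[k] Hom_k(C,B)` is a measuring, i.e. an algebra morphism from `A` to the
convolution algebra `Hom_k(C,B)`. -/
def IsMeasuring {A C B : Type u} [Ring A] [Algebra k A] [AddCommGroup C] [Module k C]
    [Coalgebra k C] [Ring B] [Algebra k B] (φ : A →ₗ[k] C →ₗ[k] B) : Prop :=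
  φ 1 = convOneL (k := k) ∧ ∀ a a' : A, φ (a * a') = convMulL (φ a) (φ a')

/-- Restriction of a measuring along a linear map `g : C →ₗ[k] C'`. -/
noncomputable def measRestrict {A C C' B : Type u} [Ring A] [Algebra k A]
    [AddCommGroup C] [Module k C] [AddCommGroup C'] [Module k C']
    [Ring B] [Algebra k B]
    (g : C →ₗ[k] C') (φ : A →ₗ[k] C' →ₗ[k] B) : A →ₗ[k] C →ₗ[k] B :=
  ((LinearMap.llcomp k C C' B).flip g).comp φ

/-- `(P, e)` is a universal measuring coalgebra for the algebras `A` and `B`: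
for every coalgebra `C`, measurings `A →ₗ[k] Hom_k(C,B)` (i.e. algebra morphisms into
the convolution algebra) are in bijection with coalgebra morphisms `C →ₗc[k] P`,
naturally in `C`. -/
structure IsUniversalMeasuring (A B P : Type u) [Ring A] [Algebra k A]
    [Ring B] [Algebra k B] [AddCommGroup P] [Module k P] [Coalgebra k P] where
  equiv : ∀ (C : Type u) [AddCommGroup C] [Module k C] [Coalgebra k C],
    {φ : A →ₗ[k] C →ₗ[k] B // IsMeasuring φ} ≃ (C →ₗc[k] P)
  naturality : ∀ (C C' : Type u) [AddCommGroup C] [Module k C] [Coalgebra k C]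
    [AddCommGroup C'] [Module k C'] [Coalgebra k C'] (g : C →ₗc[k] C')
    (φ : {φ : A →ₗ[k] C' →ₗ[k] B // IsMeasuring φ})
    (h : IsMeasuring (measRestrict g.toLinearMap φ.1)),
    equiv C ⟨measRestrict g.toLinearMap φ.1, h⟩ =
      (equiv C' φ).comp g

end MeasuringPreamble


section Aux

/-- Finitely many functionals on an infinite-dimensional space have a common
nonzero kernel element. -/
lemma exists_ne_zero_forall_eq_zero {k : Type u} [Field k] {V : Type u} [AddCommGroup V]
    [Module k V] (hinf : ¬ FiniteDimensional k V) {ι : Type*} [Finite ι]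
    (f : ι → V →ₗ[k] k) : ∃ b : V, b ≠ 0 ∧ ∀ i, f i b = 0 := by
  by_contra h
  push_neg at h
  have hker : LinearMap.ker (LinearMap.pi f) = ⊥ := by
    rw [LinearMap.ker_eq_bot']
    intro b hb
    by_contra hb0
    obtain ⟨i, hi⟩ := h b hb0
    exact hi (by simpa using congrFun congr(($hb : ι → k)) i)
  exact hinf (Module.Finite.of_injective _ (LinearMap.ker_eq_bot.mp hker))

/-- Expansion of the convolution product via a representation of `comul x`. -/
lemma convMulL_apply_repr {k : Type u} [Field k] {C : Type u} [AddCommGroup C] [Module k C]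
    [Coalgebra k C] (f g : C →ₗ[k] k) {x : C} {ι : Type*} (r : Coalgebra.Repr k x ι) :
    convMulL (k := k) f g x = ∑ i ∈ r.index, f (r.left i) * g (r.right i) := by
  simp only [convMulL, LinearMap.comp_apply, ← r.eq, map_sum, TensorProduct.map_tmul,
    LinearMap.mul'_apply]

end Aux

/-- If `A` is an infinite-dimensional division algebra over a field `k`, then the
finite dual coalgebra `A°` (the universal measuring coalgebra `P(A,k)`) is zero. -/
theorem finiteDual_of_infinite_dimensional_division_algebra_subsingleton
    {k : Type u} [Field k] {A : Type u} [DivisionRing A] [Algebra k A]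
    (hinf : ¬ FiniteDimensional k A)
    (Adual : Type u) [AddCommGroup Adual] [Module k Adual] [Coalgebra k Adual]
    (hAdual : IsUniversalMeasuring (k := k) A k Adual) :
    Subsingleton Adual := by
  classical
  set Φ := (hAdual.equiv Adual).symm (CoalgHom.id k Adual) with hΦ
  obtain ⟨hφ1, hφmul⟩ := Φ.2
  set φ := Φ.1 with hφdef
  have hz : ∀ (x : Adual) (d : A), φ d x = 0 := by
    intro x d
    set r := Coalgebra.Repr.arbitrary k x with hr
    set rr : ∀ i : Adual × Adual, Coalgebra.Repr k (r.right i) (Adual × Adual) := fun i =>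
      Coalgebra.Repr.arbitrary k (r.right i) with hrr
    obtain ⟨b, hb0, hb⟩ := exists_ne_zero_forall_eq_zero hinf
      (fun p : Σ i : {i // i ∈ r.index}, {j // j ∈ (rr i.1).index} =>
        φ.flip ((rr p.1.1).left p.2.1))
    have key : ∀ a c : A, φ (a * (b * c)) x = 0 := by
      intro a c
      rw [hφmul, convMulL_apply_repr _ _ r]
      refine Finset.sum_eq_zero fun i hi => ?_
      rw [hφmul, convMulL_apply_repr _ _ (rr i)]
      rw [Finset.sum_eq_zero, mul_zero]
      intro j hj
      have h0 := hb ⟨⟨i, hi⟩, ⟨j, hj⟩⟩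
      simp only [LinearMap.flip_apply] at h0
      rw [h0, zero_mul]
    have hd := key (d * b⁻¹) 1
    rwa [mul_one, inv_mul_cancel_right₀ hb0] at hd
  have hcz : Coalgebra.counit (R := k) (A := Adual) = 0 := by
    ext x
    have h1 := hz x 1
    rw [hφ1] at h1
    simpa [convOneL] using h1
  refine ⟨fun x y => ?_⟩
  have hx0 : ∀ z : Adual, z = 0 := by
    intro z
    have h1 : (Coalgebra.counit (R := k)).rTensor Adual (Coalgebra.comul z) = 1 ⊗ₜ[k] z :=
      Coalgebra.rTensor_counit_comul z
    rw [hcz] at h1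
    simp only [LinearMap.rTensor_zero, LinearMap.zero_apply] at h1
    have h2 := congrArg (TensorProduct.lid k Adual) h1.symm
    simpa using h2
  rw [hx0 x, hx0 y]
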